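/- Let 0 < ν₁ < ν₀ be real numbers and let h be a Lebesgue-integrable real-valued function on the rectangle (ν₁,ν₀) × (0,ν₁). If ∫_{ν₁}^{ν₀} ∫_0^{ν₁} h(x₁,x₂) · ((x₁+x₂)/2)^{m−2r} · (x₁x₂)^{r} dx₂ dx₁ = 0 for all integers m, r with 0 ≤ 2r ≤ m, then h = 0 almost everywhere. -/

import Mathlib

open MeasureTheory Set

/-- an integrable function on `(ν₁,ν₀) × (0,ν₁)` whose integrals
against all monomials `((x₁+x₂)/2)^{m−2r} (x₁x₂)^r`, `0 ≤ 2r ≤ m`, vanish is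
zero almost everywhere. -/
theorem stmt_16 (ν₁ ν₀ : ℝ) (h0 : 0 < ν₁) (h1 : ν₁ < ν₀)
    (h : ℝ × ℝ → ℝ) (hint : IntegrableOn h (Ioo ν₁ ν₀ ×ˢ Ioo 0 ν₁))
    (hvan : ∀ m r : ℕ, 2 * r ≤ m →
      ∫ x₁ in Ioo ν₁ ν₀, ∫ x₂ in Ioo (0 : ℝ) ν₁,
        h (x₁, x₂) * ((x₁ + x₂) / 2) ^ (m - 2 * r) * (x₁ * x₂) ^ r = 0) :
    ∀ᵐ p ∂(volume.restrict (Ioo ν₁ ν₀ ×ˢ Ioo 0 ν₁)), h p = 0 := by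
  set rect : Set (ℝ × ℝ) := Ioo ν₁ ν₀ ×ˢ Ioo 0 ν₁ with hrect
  set K : Set (ℝ × ℝ) := Icc ν₁ ν₀ ×ˢ Icc 0 ν₁ with hK
  have hrectK : rect ⊆ K := prod_mono Ioo_subset_Icc_self Ioo_subset_Icc_self
  have hKc : IsCompact K := isCompact_Icc.prod isCompact_Icc
  have hrect_meas : MeasurableSet rect :=
    (measurableSet_Ioo).prod measurableSet_Ioo
  haveI : CompactSpace K := isCompact_iff_compactSpace.mp hKc
  -- the clamping retraction onto `K`
  set Pr : ℝ × ℝ → K := fun p =>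
    ⟨((projIcc ν₁ ν₀ h1.le p.1 : ℝ), (projIcc (0:ℝ) ν₁ h0.le p.2 : ℝ)),
      mem_prod.mpr ⟨(projIcc ν₁ ν₀ h1.le p.1).2, (projIcc (0:ℝ) ν₁ h0.le p.2).2⟩⟩ with hPr
  have hPrcont : Continuous Pr := by
    apply Continuous.subtype_mk
    exact (continuous_subtype_val.comp (continuous_projIcc.comp continuous_fst)).prodMk
      (continuous_subtype_val.comp (continuous_projIcc.comp continuous_snd))
  have hPr1 : ∀ p ∈ rect, ((projIcc ν₁ ν₀ h1.le p.1 : ℝ)) = p.1 := by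
    intro p hp
    have hp' := hrectK hp
    rw [hK, mem_prod] at hp'
    rw [projIcc_of_mem _ hp'.1]
  have hPr2 : ∀ p ∈ rect, ((projIcc (0:ℝ) ν₁ h0.le p.2 : ℝ)) = p.2 := by
    intro p hp
    have hp' := hrectK hp
    rw [hK, mem_prod] at hp'
    rw [projIcc_of_mem _ hp'.2]
  have hPrid : ∀ p ∈ rect, ((Pr p : ℝ × ℝ)) = p := by
    intro p hp
    simp only [hPr]
    rw [hPr1 p hp, hPr2 p hp]
  -- the generators and the subalgebra
  set S : C(K, ℝ) := ⟨fun x => ((x : ℝ × ℝ).1 + (x : ℝ × ℝ).2) / 2, by fun_prop⟩ with hS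
  set P : C(K, ℝ) := ⟨fun x => (x : ℝ × ℝ).1 * (x : ℝ × ℝ).2, by fun_prop⟩ with hP
  set A : Subalgebra ℝ C(K, ℝ) := Algebra.adjoin ℝ {S, P} with hA
  -- `A` separates points
  have hsep : A.SeparatesPoints := by
    intro x y hxy
    by_cases hs : S x = S y
    · refine ⟨P, ⟨P, Algebra.subset_adjoin (by simp), rfl⟩, ?_⟩
      intro hpp
      apply hxy
      obtain ⟨⟨x₁, x₂⟩, hx⟩ := x
      obtain ⟨⟨y₁, y₂⟩, hy⟩ := y
      rw [hK, mem_prod] at hx hy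
      simp only [hS, hP, ContinuousMap.coe_mk] at hs hpp
      have hx12 : x₂ ≤ x₁ := le_trans hx.2.2 hx.1.1
      have hy12 : y₂ ≤ y₁ := le_trans hy.2.2 hy.1.1
      have hsum : x₁ + x₂ = y₁ + y₂ := by linarith
      have hsq : (x₁ - x₂) ^ 2 = (y₁ - y₂) ^ 2 := by
        linear_combination (x₁ + x₂ + y₁ + y₂) * hsum - 4 * hpp
      have hd : x₁ - x₂ = y₁ - y₂ := by
        rcases sq_eq_sq_iff_eq_or_eq_neg.mp hsq with h' | h'
        · exact h'
        · have : x₁ - x₂ = 0 := by linarith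
          linarith
      have e1 : x₁ = y₁ := by linarith
      have e2 : x₂ = y₂ := by linarith
      simp [e1, e2]
    · exact ⟨S, ⟨S, Algebra.subset_adjoin (by simp), rfl⟩, hs⟩
  -- integrability of `h` against any continuous function on `K`
  have hintg : ∀ g : C(K, ℝ), Integrable (fun p => h p * g (Pr p)) (volume.restrict rect) := by
    intro g
    have : Integrable (fun p => (g (Pr p)) * h p) (volume.restrict rect) := by
      refine hint.bdd_mul (c := ‖g‖) ?_ (Filter.Eventually.of_forall fun p => g.norm_coe_le_norm (Pr p))
      exact (g.continuous.comp hPrcont).aestronglyMeasurable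
    simpa [mul_comm] using this
  -- monomials vanish
  have hmono : ∀ a r : ℕ, ∫ p in rect, h p * ((S ^ a * P ^ r : C(K, ℝ)) (Pr p)) = 0 := by
    intro a r
    have heq : EqOn (fun p : ℝ × ℝ => h p * ((S ^ a * P ^ r : C(K, ℝ)) (Pr p)))
        (fun p : ℝ × ℝ => h p * ((p.1 + p.2) / 2) ^ a * (p.1 * p.2) ^ r) rect := by
      intro p hp
      simp only [ContinuousMap.mul_apply, ContinuousMap.pow_apply, hS, hP,
        ContinuousMap.coe_mk, hPr, mul_assoc]
      rw [hPr1 p hp, hPr2 p hp]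
    have hI0 : IntegrableOn (fun p => h p * ((S ^ a * P ^ r : C(K, ℝ)) (Pr p))) rect :=
      hintg (S ^ a * P ^ r)
    have hI : IntegrableOn (fun p : ℝ × ℝ =>
        h p * ((p.1 + p.2) / 2) ^ a * (p.1 * p.2) ^ r) rect :=
      hI0.congr_fun heq hrect_meas
    calc ∫ p in rect, h p * ((S ^ a * P ^ r : C(K, ℝ)) (Pr p))
        = ∫ p in rect, h p * ((p.1 + p.2) / 2) ^ a * (p.1 * p.2) ^ r :=
          setIntegral_congr_fun hrect_meas heq
      _ = ∫ x₁ in Ioo ν₁ ν₀, ∫ x₂ in Ioo (0:ℝ) ν₁,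
            h (x₁, x₂) * ((x₁ + x₂) / 2) ^ a * (x₁ * x₂) ^ r := by
          rw [hrect, MeasureTheory.Measure.volume_eq_prod]
          exact setIntegral_prod _ (by rwa [← MeasureTheory.Measure.volume_eq_prod, ← hrect])
      _ = 0 := by
          have := hvan (a + 2 * r) r (by omega)
          simpa using this
  -- all elements of `A` vanish against `h`
  have hpow : ∀ g ∈ Submonoid.closure ({S, P} : Set C(K, ℝ)), ∃ a r : ℕ, g = S ^ a * P ^ r := by
    intro g hgm
    induction hgm using Submonoid.closure_induction with
    | one => exact ⟨0, 0, by simp⟩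
    | mem x hx =>
        rcases hx with rfl | rfl
        · exact ⟨1, 0, by simp⟩
        · exact ⟨0, 1, by simp⟩
    | mul x y _ _ hx hy =>
        obtain ⟨a, r, rfl⟩ := hx
        obtain ⟨a', r', rfl⟩ := hy
        exact ⟨a + a', r + r', by rw [pow_add, pow_add]; ring⟩
  have hAvan : ∀ g ∈ A, ∫ p in rect, h p * g (Pr p) = 0 := by
    intro g hg
    have hg' : g ∈ Submodule.span ℝ (Submonoid.closure ({S, P} : Set C(K, ℝ)) : Set C(K, ℝ)) := by
      rw [← Algebra.adjoin_eq_span]; exact hg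
    clear hg
    induction hg' using Submodule.span_induction with
    | mem g hgm =>
        obtain ⟨a, r, rfl⟩ := hpow g hgm
        exact hmono a r
    | zero => simp
    | add g₁ g₂ _ _ ih₁ ih₂ =>
        have : ∀ p, h p * ((g₁ + g₂) (Pr p)) = h p * g₁ (Pr p) + h p * g₂ (Pr p) := by
          intro p; simp [mul_add]
        simp only [this]
        rw [integral_add (hintg g₁) (hintg g₂), ih₁, ih₂, add_zero]
    | smul c g _ ih =>
        have : ∀ p, h p * ((c • g) (Pr p)) = c * (h p * g (Pr p)) := by
          intro p; simp [ContinuousMap.smul_apply, smul_eq_mul]; ring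
        simp only [this]
        rw [integral_const_mul, ih, mul_zero]
  -- integrals against all continuous functions vanish
  have key : ∀ G : ℝ × ℝ → ℝ, Continuous G → ∫ p in rect, G p • h p = 0 := by
    intro G hG
    set f : C(K, ℝ) := ⟨fun x => G (x : ℝ × ℝ), hG.comp continuous_subtype_val⟩ with hf
    have hGf : ∀ p ∈ rect, G p = f (Pr p) := by
      intro p hp
      simp only [hf, hPr, ContinuousMap.coe_mk]
      rw [hPr1 p hp, hPr2 p hp]
    set C : ℝ := ∫ p in rect, ‖h p‖ with hC
    have hC0 : 0 ≤ C := integral_nonneg fun p => norm_nonneg _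
    have hIeq : ∫ p in rect, G p • h p = ∫ p in rect, h p * f (Pr p) := by
      apply setIntegral_congr_fun hrect_meas
      intro p hp
      simp [hGf p hp, mul_comm]
    rw [hIeq]
    have habs : ∀ ε : ℝ, 0 < ε → ‖∫ p in rect, h p * f (Pr p)‖ ≤ ε := by
      intro ε hε
      have hδ : 0 < ε / (C + 1) := div_pos hε (by linarith)
      obtain ⟨q, hq⟩ := ContinuousMap.exists_mem_subalgebra_near_continuousMap_of_separatesPoints
        A hsep f (ε / (C + 1)) hδ
      have hq' : ∀ x : K, ‖f x - (q : C(K, ℝ)) x‖ < ε / (C + 1) := by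
        intro x
        have := (ContinuousMap.norm_lt_iff _ hδ).mp hq x
        rw [ContinuousMap.sub_apply] at this
        rw [norm_sub_rev]
        exact this
      have hq0 : ∫ p in rect, h p * (q : C(K, ℝ)) (Pr p) = 0 := hAvan _ q.2
      have hsub : ∫ p in rect, h p * f (Pr p)
          = ∫ p in rect, h p * ((f - (q : C(K, ℝ))) (Pr p)) := by
        have : ∀ p, h p * ((f - (q : C(K, ℝ))) (Pr p))
            = h p * f (Pr p) - h p * (q : C(K, ℝ)) (Pr p) := by
          intro p; simp [mul_sub]
        rw [show (fun p => h p * ((f - (q : C(K, ℝ))) (Pr p)))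
            = fun p => h p * f (Pr p) - h p * (q : C(K, ℝ)) (Pr p) from funext this]
        rw [integral_sub (hintg f) (hintg (q : C(K, ℝ))), hq0, sub_zero]
      rw [hsub]
      calc ‖∫ p in rect, h p * ((f - (q : C(K, ℝ))) (Pr p))‖
          ≤ ∫ p in rect, ‖h p * ((f - (q : C(K, ℝ))) (Pr p))‖ :=
            norm_integral_le_integral_norm _
        _ ≤ ∫ p in rect, ‖h p‖ * (ε / (C + 1)) := by
            apply integral_mono (hintg (f - (q : C(K, ℝ)))).norm (hint.norm.mul_const _)
            intro p
            show ‖h p * ((f - (q : C(K, ℝ))) (Pr p))‖ ≤ ‖h p‖ * (ε / (C + 1))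
            rw [norm_mul]
            have : ‖(f - (q : C(K, ℝ))) (Pr p)‖ ≤ ε / (C + 1) := by
              rw [ContinuousMap.sub_apply]
              exact le_of_lt (hq' (Pr p))
            exact mul_le_mul_of_nonneg_left this (norm_nonneg _)
        _ = C * (ε / (C + 1)) := by rw [integral_mul_const]
        _ ≤ (C + 1) * (ε / (C + 1)) := by
            apply mul_le_mul_of_nonneg_right (by linarith) (le_of_lt hδ)
        _ = ε := by field_simp
    have hle : ‖∫ p in rect, h p * f (Pr p)‖ ≤ 0 := by
      by_contra hcon
      push_neg at hcon
      exact absurd (habs _ (half_pos hcon)) (by linarith)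
    have h0' : ‖∫ p in rect, h p * f (Pr p)‖ = 0 := le_antisymm hle (norm_nonneg _)
    exact norm_eq_zero.mp h0'
  -- conclude via smooth test functions
  apply ae_eq_zero_of_integral_contDiff_smul_eq_zero (μ := volume.restrict rect)
  · exact hint.locallyIntegrable
  · intro g hg _
    exact key g hg.continuous
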